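/- For every rule word w (trivial or not) and every configuration (C,p,d): if the set of positions visited by the forward orbit, {p_t : t ≥ 0} where (C_t,p_t,d_t) = T_w^t(C,p,d), is finite, then the orbit is periodic, i.e. there exists T > 0 with T_w^T(C,p,d) = (C,p,d). -/

import Mathlib

/-- Cells of the grid `ℤ²`. -/
abbrev Cell : Type := ℤ × ℤ

/-- The two letters of a rule word. -/
inductive Letter : Type
  | L | R
deriving DecidableEq

/-- The four unit directions of `ℤ²` (the state set `Q`). -/
inductive Dir : Type
  | E | N | W | S
deriving DecidableEq

/-- Rotation by 90° counterclockwise. -/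
def Dir.left : Dir → Dir
  | .E => .N | .N => .W | .W => .S | .S => .E

/-- Rotation by 90° clockwise. -/
def Dir.right : Dir → Dir
  | .E => .S | .S => .W | .W => .N | .N => .E

/-- The unit vector of a direction. -/
def Dir.vec : Dir → Cell
  | .E => (1, 0) | .N => (0, 1) | .W => (-1, 0) | .S => (0, -1)

/-- Configurations: a picture `ℤ² → ℤ/nℤ`, a position and a direction. -/
abbrev Config (n : ℕ) : Type := (Cell → ZMod n) × Cell × Dir

/-- One step of the generalised ant with rule word `w ∈ {L,R}⁺`:
the symbol under the ant is increased by `1 (mod |w|)`, the ant turns left or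
right according to the letter `w_{C(p)}`, and moves one step in its new direction. -/
def antStepW (w : List Letter) (cfg : Config w.length) : Config w.length :=
  let C := cfg.1
  let p := cfg.2.1
  let d' := if w.getD (C p).val Letter.L = Letter.L then cfg.2.2.left else cfg.2.2.right
  (Function.update C p (C p + 1), p + d'.vec, d')

instance : Fintype Dir := ⟨{Dir.E, Dir.N, Dir.W, Dir.S}, fun d => by cases d <;> simp⟩

lemma Dir.left_right (d : Dir) : d.left.right = d := by cases d <;> rfl
lemma Dir.right_left (d : Dir) : d.right.left = d := by cases d <;> rfl

/-- Inverse step. -/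
def antInv (w : List Letter) (c : Config w.length) : Config w.length :=
  (Function.update c.1 (c.2.1 - c.2.2.vec) (c.1 (c.2.1 - c.2.2.vec) - 1),
   c.2.1 - c.2.2.vec,
   if w.getD (c.1 (c.2.1 - c.2.2.vec) - 1).val Letter.L = Letter.L then c.2.2.right
   else c.2.2.left)

lemma antInv_antStep (w : List Letter) (cfg : Config w.length) :
    antInv w (antStepW w cfg) = cfg := by
  obtain ⟨C, p, d⟩ := cfg
  have hstep : antStepW w (C, p, d) =
      (Function.update C p (C p + 1),
       p + (if w.getD (C p).val Letter.L = Letter.L then d.left else d.right).vec,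
       if w.getD (C p).val Letter.L = Letter.L then d.left else d.right) := rfl
  rw [hstep]
  set e := if w.getD (C p).val Letter.L = Letter.L then d.left else d.right with he
  show (Function.update (Function.update C p (C p + 1)) (p + e.vec - e.vec)
      (Function.update C p (C p + 1) (p + e.vec - e.vec) - 1),
    p + e.vec - e.vec,
    if w.getD (Function.update C p (C p + 1) (p + e.vec - e.vec) - 1).val Letter.L = Letter.L
      then e.right else e.left) = (C, p, d)
  rw [add_sub_cancel_right, Function.update_self, add_sub_cancel_right,
    Function.update_idem, Function.update_eq_self]
  by_cases h : w.getD (C p).val Letter.L = Letter.L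
  · rw [if_pos h, he, if_pos h, Dir.left_right]
  · rw [if_neg h, he, if_neg h, Dir.right_left]

lemma antStep_injective (w : List Letter) : Function.Injective (antStepW w) :=
  Function.LeftInverse.injective (antInv_antStep w)

/-- For every rule word `w` (trivial or not) and every configuration:
if the set of positions visited by the forward orbit is finite, then the orbit is
periodic. -/
theorem ant_finite_orbit_periodic (w : List Letter) (hw : w ≠ [])
    (cfg : Config w.length)
    (hfin : {q : Cell | ∃ t : ℕ, ((antStepW w)^[t] cfg).2.1 = q}.Finite) :
    ∃ T : ℕ, 0 < T ∧ (antStepW w)^[T] cfg = cfg := by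
  haveI : NeZero w.length := ⟨by simpa using hw⟩
  set f := antStepW w with hf
  set V : Set Cell := {q : Cell | ∃ t : ℕ, (f^[t] cfg).2.1 = q} with hV
  -- cells outside V never change
  have off : ∀ t : ℕ, ∀ q : Cell, q ∉ V → (f^[t] cfg).1 q = cfg.1 q := by
    intro t
    induction t with
    | zero => intro q _; rfl
    | succ t ih =>
      intro q hq
      rw [Function.iterate_succ_apply']
      have hp : (f^[t] cfg).2.1 ∈ V := ⟨t, rfl⟩
      have hne : q ≠ (f^[t] cfg).2.1 := fun h => hq (h ▸ hp)
      show Function.update (f^[t] cfg).1 (f^[t] cfg).2.1 _ q = cfg.1 q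
      rw [Function.update_of_ne hne]
      exact ih q hq
  -- the orbit lies in a finite set
  haveI := hfin.fintype
  set G : Set (Cell → ZMod w.length) := {C' | ∀ q ∉ V, C' q = cfg.1 q} with hG
  have hGfin : G.Finite := by
    have hinj : Set.InjOn (fun C' (v : V) => C' (v : Cell)) G := by
      intro a ha b hb hab
      funext q
      by_cases hq : q ∈ V
      · exact congrFun hab ⟨q, hq⟩
      · rw [ha q hq, hb q hq]
    exact Set.Finite.of_finite_image (Set.toFinite _) hinj
  have horb : (Set.range (fun t : ℕ => f^[t] cfg)).Finite := by
    apply Set.Finite.subset (hGfin.prod (hfin.prod (Set.finite_univ (α := Dir))))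
    rintro c ⟨t, rfl⟩
    exact ⟨fun q hq => off t q hq, ⟨t, rfl⟩, trivial⟩
  -- pigeonhole
  obtain ⟨a, -, b, -, hab, heq⟩ :=
    Set.infinite_univ.exists_ne_map_eq_of_mapsTo
      (f := fun t : ℕ => f^[t] cfg) (fun t _ => Set.mem_range_self t) horb
  wlog h : a < b generalizing a b
  · exact this b a hab.symm heq.symm (by omega)
  refine ⟨b - a, by omega, ?_⟩
  have := antStep_injective w
  have hinj : Function.Injective (f^[a]) := Function.Injective.iterate this a
  apply hinj
  rw [← Function.iterate_add_apply]
  have : a + (b - a) = b := by omega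
  rw [this, ← heq]
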